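/- Let w ∈ ℂ[x₁,...,xₙ] and v ∈ ℂ[y₁,...,yₘ] be polynomials, each with an isolated singularity at the origin (i.e., finite-dimensional Milnor algebra). Then the Milnor number of the Thom–Sebastiani sum w + v ∈ ℂ[x₁,...,xₙ,y₁,...,yₘ] equals the product μ(w)·μ(v). -/

import Mathlib

open MvPolynomial

/-- The Milnor algebra (Jacobian ring) of a polynomial `w`. -/
noncomputable def milnorAlgebra {σ : Type} (w : MvPolynomial σ ℂ) : Type :=
  MvPolynomial σ ℂ ⧸ Ideal.span (Set.range fun i : σ => pderiv i w)

noncomputable instance {σ : Type} (w : MvPolynomial σ ℂ) : CommRing (milnorAlgebra w) :=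
  Ideal.Quotient.commRing _

noncomputable instance {σ : Type} (w : MvPolynomial σ ℂ) : Algebra ℂ (milnorAlgebra w) :=
  Ideal.Quotient.algebra ℂ

/-- The Milnor number: the ℂ-dimension of the Milnor algebra. -/
noncomputable def milnor {σ : Type} (w : MvPolynomial σ ℂ) : ℕ :=
  Module.finrank ℂ (milnorAlgebra w)

noncomputable instance {σ : Type} (w : MvPolynomial σ ℂ) :
    @Module ℂ (milnorAlgebra w) _ AddCommGroup.toAddCommMonoid :=
  Algebra.toModule

open TensorProduct

noncomputable def tsEquiv (n m : ℕ) :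
    MvPolynomial (Fin n ⊕ Fin m) ℂ ≃ₐ[ℂ] MvPolynomial (Fin n) ℂ ⊗[ℂ] MvPolynomial (Fin m) ℂ :=
  (sumAlgEquiv ℂ (Fin n) (Fin m)).trans <|
    (((algebraTensorAlgEquiv ℂ (MvPolynomial (Fin m) ℂ)).restrictScalars ℂ
        (A := MvPolynomial (Fin m) ℂ ⊗[ℂ] MvPolynomial (Fin n) ℂ)
        (B := MvPolynomial (Fin n) (MvPolynomial (Fin m) ℂ))).symm).trans
      (Algebra.TensorProduct.comm ℂ _ _)

lemma tsEquiv_X_inl (n m : ℕ) (i : Fin n) :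
    tsEquiv n m (X (Sum.inl i)) = (X i : MvPolynomial (Fin n) ℂ) ⊗ₜ 1 := by
  have : ((algebraTensorAlgEquiv ℂ (MvPolynomial (Fin m) ℂ)
        (σ := Fin n)).restrictScalars ℂ).symm
      = ((algebraTensorAlgEquiv ℂ (MvPolynomial (Fin m) ℂ)).symm.restrictScalars ℂ) := rfl
  simp [tsEquiv, this, AlgEquiv.restrictScalars_apply]

lemma tsEquiv_X_inr (n m : ℕ) (j : Fin m) :
    tsEquiv n m (X (Sum.inr j)) = 1 ⊗ₜ (X j : MvPolynomial (Fin m) ℂ) := by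
  have : ((algebraTensorAlgEquiv ℂ (MvPolynomial (Fin m) ℂ)
        (σ := Fin n)).restrictScalars ℂ).symm
      = ((algebraTensorAlgEquiv ℂ (MvPolynomial (Fin m) ℂ)).symm.restrictScalars ℂ) := rfl
  have h2 : (C (X j) : MvPolynomial (Fin n) (MvPolynomial (Fin m) ℂ))
      = algebraMap (MvPolynomial (Fin m) ℂ) _ (X j) := rfl
  simp [tsEquiv, this, AlgEquiv.restrictScalars_apply, h2,
    Algebra.TensorProduct.algebraMap_apply]

lemma tsEquiv_comp_inl (n m : ℕ) :
    ((tsEquiv n m).toAlgHom).comp (rename Sum.inl) = Algebra.TensorProduct.includeLeft := by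
  apply algHom_ext
  intro i
  simp [tsEquiv_X_inl]

lemma tsEquiv_comp_inr (n m : ℕ) :
    ((tsEquiv n m).toAlgHom).comp (rename Sum.inr) =
      (Algebra.TensorProduct.includeRight : MvPolynomial (Fin m) ℂ →ₐ[ℂ] _) := by
  apply algHom_ext
  intro j
  simp [tsEquiv_X_inr]

open Algebra.TensorProduct in
theorem restrict_map_sup {P Q : Type} [CommRing P] [CommRing Q] [Algebra ℂ P] [Algebra ℂ Q]
    (Iw : Ideal P) (Iv : Ideal Q) :
    Submodule.restrictScalars ℂ
        (Ideal.map (includeLeft : P →ₐ[ℂ] P ⊗[ℂ] Q) Iw ⊔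
          Ideal.map (includeRight : Q →ₐ[ℂ] P ⊗[ℂ] Q) Iv)
      = LinearMap.range (TensorProduct.map (Iw.restrictScalars ℂ).subtype
            (LinearMap.id (M := Q))) ⊔
        LinearMap.range (TensorProduct.map (LinearMap.id (M := P))
            (Iv.restrictScalars ℂ).subtype) := by
  have closL : ∀ (r x : P ⊗[ℂ] Q),
      x ∈ LinearMap.range (TensorProduct.map (Iw.restrictScalars ℂ).subtype
        (LinearMap.id (M := Q))) →
      r * x ∈ LinearMap.range (TensorProduct.map (Iw.restrictScalars ℂ).subtype
        (LinearMap.id (M := Q))) := by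
    intro r x hx
    obtain ⟨t, rfl⟩ := hx
    induction r using TensorProduct.induction_on with
    | zero => simpa using zero_mem _
    | add r₁ r₂ h₁ h₂ => rw [add_mul]; exact add_mem h₁ h₂
    | tmul p q =>
      induction t using TensorProduct.induction_on with
      | zero => simpa using zero_mem _
      | add t₁ t₂ h₁ h₂ => rw [map_add, mul_add]; exact add_mem h₁ h₂
      | tmul a b =>
        refine ⟨(⟨p * a.1, Iw.mul_mem_left p a.2⟩ : Iw.restrictScalars ℂ) ⊗ₜ (q * b), ?_⟩
        simp [Algebra.TensorProduct.tmul_mul_tmul]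
  have closR : ∀ (r x : P ⊗[ℂ] Q),
      x ∈ LinearMap.range (TensorProduct.map (LinearMap.id (M := P))
        (Iv.restrictScalars ℂ).subtype) →
      r * x ∈ LinearMap.range (TensorProduct.map (LinearMap.id (M := P))
        (Iv.restrictScalars ℂ).subtype) := by
    intro r x hx
    obtain ⟨t, rfl⟩ := hx
    induction r using TensorProduct.induction_on with
    | zero => simpa using zero_mem _
    | add r₁ r₂ h₁ h₂ => rw [add_mul]; exact add_mem h₁ h₂
    | tmul p q =>
      induction t using TensorProduct.induction_on with
      | zero => simpa using zero_mem _
      | add t₁ t₂ h₁ h₂ => rw [map_add, mul_add]; exact add_mem h₁ h₂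
      | tmul a b =>
        refine ⟨(p * a) ⊗ₜ (⟨q * b.1, Iv.mul_mem_left q b.2⟩ : Iv.restrictScalars ℂ), ?_⟩
        simp [Algebra.TensorProduct.tmul_mul_tmul]
  refine le_antisymm ?_ ?_
  · intro x hx
    rw [Submodule.restrictScalars_mem] at hx
    obtain ⟨y, hy, z, hz, rfl⟩ := Submodule.mem_sup.1 hx
    refine add_mem (Submodule.mem_sup_left ?_) (Submodule.mem_sup_right ?_)
    · have hy' : y ∈ Submodule.span (P ⊗[ℂ] Q)
          ((includeLeft : P →ₐ[ℂ] P ⊗[ℂ] Q) '' Iw) := hy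
      refine Submodule.span_induction ?_ (zero_mem _) (fun a b _ _ ha hb => add_mem ha hb)
        (fun r a _ ha => by rw [smul_eq_mul]; exact closL r a ha) hy'
      rintro _ ⟨a, ha, rfl⟩
      exact ⟨(⟨a, ha⟩ : Iw.restrictScalars ℂ) ⊗ₜ 1, by simp⟩
    · have hz' : z ∈ Submodule.span (P ⊗[ℂ] Q)
          ((includeRight : Q →ₐ[ℂ] P ⊗[ℂ] Q) '' Iv) := hz
      refine Submodule.span_induction ?_ (zero_mem _) (fun a b _ _ ha hb => add_mem ha hb)
        (fun r a _ ha => by rw [smul_eq_mul]; exact closR r a ha) hz'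
      rintro _ ⟨b, hb, rfl⟩
      exact ⟨1 ⊗ₜ (⟨b, hb⟩ : Iv.restrictScalars ℂ), by simp⟩
  · rw [TensorProduct.range_map_eq_span_tmul, TensorProduct.range_map_eq_span_tmul]
    refine sup_le (Submodule.span_le.2 ?_) (Submodule.span_le.2 ?_)
    · rintro _ ⟨a, b, rfl⟩
      simp only [SetLike.mem_coe, Submodule.restrictScalars_mem]
      refine Submodule.mem_sup_left ?_
      have : ((Iw.restrictScalars ℂ).subtype a) ⊗ₜ[ℂ] ((LinearMap.id : Q →ₗ[ℂ] Q) b)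
          = ((includeLeft : P →ₐ[ℂ] P ⊗[ℂ] Q) a.1) * (1 ⊗ₜ b) := by
        simp [Algebra.TensorProduct.tmul_mul_tmul]
      rw [this]
      exact Ideal.mul_mem_right _ _ (Ideal.mem_map_of_mem _ a.2)
    · rintro _ ⟨a, b, rfl⟩
      simp only [SetLike.mem_coe, Submodule.restrictScalars_mem]
      refine Submodule.mem_sup_right ?_
      have : ((LinearMap.id : P →ₗ[ℂ] P) a) ⊗ₜ[ℂ] ((Iv.restrictScalars ℂ).subtype b)
          = ((includeRight : Q →ₐ[ℂ] P ⊗[ℂ] Q) b.1) * (a ⊗ₜ 1) := by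
        simp [Algebra.TensorProduct.tmul_mul_tmul]
      rw [this]
      exact Ideal.mul_mem_right _ _ (Ideal.mem_map_of_mem _ b.2)

/-- Multiplicativity of the Milnor number under Thom–Sebastiani sums. -/
theorem milnor_thom_sebastiani (n m : ℕ)
    (w : MvPolynomial (Fin n) ℂ) (v : MvPolynomial (Fin m) ℂ)
    (hw : FiniteDimensional ℂ (milnorAlgebra w))
    (hv : FiniteDimensional ℂ (milnorAlgebra v)) :
    milnor ((rename Sum.inl w + rename Sum.inr v : MvPolynomial (Fin n ⊕ Fin m) ℂ))
      = milnor w * milnor v := by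
  classical
  set f : MvPolynomial (Fin n ⊕ Fin m) ℂ := rename Sum.inl w + rename Sum.inr v with hfdef
  set Iw : Ideal (MvPolynomial (Fin n) ℂ) :=
    Ideal.span (Set.range fun i : Fin n => pderiv i w) with hIw
  set Iv : Ideal (MvPolynomial (Fin m) ℂ) :=
    Ideal.span (Set.range fun j : Fin m => pderiv j v) with hIv
  set J : Ideal (MvPolynomial (Fin n ⊕ Fin m) ℂ) :=
    Ideal.span (Set.range fun i : Fin n ⊕ Fin m => pderiv i f) with hJ
  have hpd : (fun i : Fin n ⊕ Fin m => pderiv i f)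
      = Sum.elim (fun i : Fin n => rename Sum.inl (pderiv i w))
          (fun j : Fin m => rename Sum.inr (pderiv j v)) := by
    funext i
    cases i with
    | inl i =>
      have h2 : pderiv (Sum.inl i) (rename (Sum.inr : Fin m → Fin n ⊕ Fin m) v) = 0 := by
        refine pderiv_eq_zero_of_notMem_vars fun hmem => ?_
        obtain ⟨j, -, hj⟩ := mem_vars_rename _ _ hmem
        exact absurd hj (by simp)
      simp [hfdef, pderiv_rename Sum.inl_injective, h2]
    | inr j =>
      have h2 : pderiv (Sum.inr j) (rename (Sum.inl : Fin n → Fin n ⊕ Fin m) w) = 0 := by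
        refine pderiv_eq_zero_of_notMem_vars fun hmem => ?_
        obtain ⟨i, -, hi⟩ := mem_vars_rename _ _ hmem
        exact absurd hi (by simp)
      simp [hfdef, pderiv_rename Sum.inr_injective, h2]
  have hJ2 : J = Ideal.map (rename Sum.inl :
        MvPolynomial (Fin n) ℂ →ₐ[ℂ] MvPolynomial (Fin n ⊕ Fin m) ℂ) Iw
      ⊔ Ideal.map (rename Sum.inr :
        MvPolynomial (Fin m) ℂ →ₐ[ℂ] MvPolynomial (Fin n ⊕ Fin m) ℂ) Iv := by
    rw [hJ, hpd, hIw, hIv, Ideal.map_span, Ideal.map_span, ← Set.range_comp, ← Set.range_comp,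
      ← Ideal.span_union, ← Set.Sum.elim_range]
    rfl
  have hmapJ : Ideal.map (tsEquiv n m).toAlgHom J =
      Ideal.map (Algebra.TensorProduct.includeLeft :
        MvPolynomial (Fin n) ℂ →ₐ[ℂ] MvPolynomial (Fin n) ℂ ⊗[ℂ] MvPolynomial (Fin m) ℂ) Iw ⊔
      Ideal.map (Algebra.TensorProduct.includeRight :
        MvPolynomial (Fin m) ℂ →ₐ[ℂ] MvPolynomial (Fin n) ℂ ⊗[ℂ] MvPolynomial (Fin m) ℂ) Iv := by
    rw [hJ2, Ideal.map_sup, Ideal.map_mapₐ, Ideal.map_mapₐ, tsEquiv_comp_inl, tsEquiv_comp_inr]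
  have hsub : Submodule.map (((tsEquiv n m).toLinearEquiv : MvPolynomial (Fin n ⊕ Fin m) ℂ ≃ₗ[ℂ] _) :
          MvPolynomial (Fin n ⊕ Fin m) ℂ →ₗ[ℂ] _)
        (J.restrictScalars ℂ)
      = LinearMap.range (TensorProduct.map (Iw.restrictScalars ℂ).subtype
            (LinearMap.id (M := MvPolynomial (Fin m) ℂ))) ⊔
        LinearMap.range (TensorProduct.map (LinearMap.id (M := MvPolynomial (Fin n) ℂ))
            (Iv.restrictScalars ℂ).subtype) := by
    rw [← restrict_map_sup Iw Iv, ← hmapJ]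
    ext x
    constructor
    · rintro ⟨y, hy, rfl⟩
      rw [Submodule.restrictScalars_mem]
      exact Ideal.mem_map_of_mem _ hy
    · intro hx
      rw [Submodule.restrictScalars_mem] at hx
      have hx' : x ∈ Ideal.map (tsEquiv n m) J := hx
      obtain ⟨y, hy, rfl⟩ := (Ideal.mem_map_of_equiv (tsEquiv n m) x).1 hx'
      exact ⟨y, hy, rfl⟩
  have E : milnorAlgebra f ≃ₗ[ℂ] (milnorAlgebra w) ⊗[ℂ] (milnorAlgebra v) :=
    (Submodule.Quotient.restrictScalarsEquiv ℂ J).symm ≪≫ₗ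
    (Submodule.Quotient.equiv (J.restrictScalars ℂ) _
      ((tsEquiv n m).toLinearEquiv : MvPolynomial (Fin n ⊕ Fin m) ℂ ≃ₗ[ℂ] _) hsub) ≪≫ₗ
    (TensorProduct.quotientTensorQuotientEquiv
      (Iw.restrictScalars ℂ) (Iv.restrictScalars ℂ)).symm ≪≫ₗ
    TensorProduct.congr (Submodule.Quotient.restrictScalarsEquiv ℂ Iw)
      (Submodule.Quotient.restrictScalarsEquiv ℂ Iv)
  calc milnor f = Module.finrank ℂ (milnorAlgebra f) := rfl
    _ = Module.finrank ℂ ((milnorAlgebra w) ⊗[ℂ] (milnorAlgebra v)) := E.finrank_eq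
    _ = milnor w * milnor v := by
      haveI : Module.Free ℂ (milnorAlgebra w) := Module.Free.of_divisionRing ℂ _
      haveI : Module.Free ℂ (milnorAlgebra v) := Module.Free.of_divisionRing ℂ _
      exact Module.finrank_tensorProduct
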